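/- Let f_{abc} (a,b,c ∈ {1,…,r}) be totally antisymmetric real constants satisfying the Jacobi identity Σ_c (f_{abc} f_{dec} + f_{bdc} f_{aec} + f_{dac} f_{bec}) = 0 for all a,b,d,e. Then for every m ≥ 1, every u ∈ ℝ^r and every family of vectors A_1,…,A_r ∈ ℝ^m one has Σ_{a,b,c,d,e,g,h} f_{abc} f_{dce} f_{dgh} u_a ⟨A_b, A_g⟩ ⟨A_e, A_h⟩ = 0, where ⟨·,·⟩ is the Euclidean inner product on ℝ^m and all seven indices run over {1,…,r}. -/
import Mathlib

open Finset

private lemma sum_perm {α : Type*} [Fintype α] (σ : α ≃ α) (F G : α → ℝ)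
    (h : ∀ p, F (σ p) = G p) : ∑ p, F p = ∑ p, G p := by
  rw [← Equiv.sum_comp σ F]
  exact Finset.sum_congr rfl fun p _ => h p

private lemma sum7_expand {I : Type*} [Fintype I] (F : I → I → I → I → I → I → I → ℝ) :
    (∑ a, ∑ b, ∑ c, ∑ d, ∑ e, ∑ g, ∑ h, F a b c d e g h)
      = ∑ p : I × I × I × I × I × I × I,
          F p.1 p.2.1 p.2.2.1 p.2.2.2.1 p.2.2.2.2.1 p.2.2.2.2.2.1 p.2.2.2.2.2.2 := by
  simp [Fintype.sum_prod_type]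

/-- move the third index to the last position -/
private def cPerm {I : Type*} : (I × I × I × I × I × I × I) ≃ (I × I × I × I × I × I × I) where
  toFun p := (p.1, p.2.1, p.2.2.2.2.2.2, p.2.2.1, p.2.2.2.1, p.2.2.2.2.1, p.2.2.2.2.2.1)
  invFun p := (p.1, p.2.1, p.2.2.2.1, p.2.2.2.2.1, p.2.2.2.2.2.1, p.2.2.2.2.2.2, p.2.2.1)
  left_inv := fun _ => rfl
  right_inv := fun _ => rfl

/-- swap slots 2↔5 and 6↔7 -/
private def tau1 {I : Type*} : (I × I × I × I × I × I × I) ≃ (I × I × I × I × I × I × I) where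
  toFun p := (p.1, p.2.2.2.2.1, p.2.2.1, p.2.2.2.1, p.2.1, p.2.2.2.2.2.2, p.2.2.2.2.2.1)
  invFun p := (p.1, p.2.2.2.2.1, p.2.2.1, p.2.2.2.1, p.2.1, p.2.2.2.2.2.2, p.2.2.2.2.2.1)
  left_inv := fun _ => rfl
  right_inv := fun _ => rfl

/-- swap slots 2↔6, 3↔4, 5↔7 -/
private def tau2 {I : Type*} : (I × I × I × I × I × I × I) ≃ (I × I × I × I × I × I × I) where
  toFun p := (p.1, p.2.2.2.2.2.1, p.2.2.2.1, p.2.2.1, p.2.2.2.2.2.2, p.2.1, p.2.2.2.2.1)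
  invFun p := (p.1, p.2.2.2.2.2.1, p.2.2.2.1, p.2.2.1, p.2.2.2.2.2.2, p.2.1, p.2.2.2.2.1)
  left_inv := fun _ => rfl
  right_inv := fun _ => rfl

private lemma sum7_reorder {I : Type*} [Fintype I] (F : I → I → I → I → I → I → I → ℝ) :
    (∑ a, ∑ b, ∑ c, ∑ d, ∑ e, ∑ g, ∑ h, F a b c d e g h)
      = ∑ a, ∑ b, ∑ d, ∑ e, ∑ g, ∑ h, ∑ c, F a b c d e g h := by
  refine (sum7_expand F).trans
    (Eq.trans ?_ (sum7_expand (fun a b d e g h c => F a b c d e g h)).symm)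
  exact sum_perm cPerm _ _ fun p => rfl

private lemma sum7_tau1 {I : Type*} [Fintype I] (F : I → I → I → I → I → I → I → ℝ) :
    (∑ a, ∑ b, ∑ c, ∑ d, ∑ e, ∑ g, ∑ h, F a b c d e g h)
      = ∑ a, ∑ b, ∑ c, ∑ d, ∑ e, ∑ g, ∑ h, F a e c d b h g := by
  refine (sum7_expand F).trans
    (Eq.trans ?_ (sum7_expand (fun a b c d e g h => F a e c d b h g)).symm)
  exact sum_perm tau1 _ _ fun p => rfl

private lemma sum7_tau2 {I : Type*} [Fintype I] (F : I → I → I → I → I → I → I → ℝ) :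
    (∑ a, ∑ b, ∑ c, ∑ d, ∑ e, ∑ g, ∑ h, F a b c d e g h)
      = ∑ a, ∑ b, ∑ c, ∑ d, ∑ e, ∑ g, ∑ h, F a g d c h b e := by
  refine (sum7_expand F).trans
    (Eq.trans ?_ (sum7_expand (fun a b c d e g h => F a g d c h b e)).symm)
  exact sum_perm tau2 _ _ fun p => rfl

/-- The third-order anomaly term `A_1 = f_{abc} f_{dce} f_{dgh} u_a ⟨A_b,A_g⟩ ⟨A_e,A_h⟩`
vanishes as a consequence of the Jacobi identity for the totally antisymmetric structure
constants `f`. -/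
theorem stmt_11 (r m : ℕ) (hm : 1 ≤ m) (f : Fin r → Fin r → Fin r → ℝ)
    (hanti1 : ∀ a b c, f a b c = - f b a c)
    (hanti2 : ∀ a b c, f a b c = - f a c b)
    (hJacobi : ∀ a b d e,
      ∑ c, (f a b c * f d e c + f b d c * f a e c + f d a c * f b e c) = 0)
    (u : Fin r → ℝ) (A : Fin r → Fin m → ℝ) :
    ∑ a, ∑ b, ∑ c, ∑ d, ∑ e, ∑ g, ∑ h,
      f a b c * f d c e * f d g h * u a *
        (∑ i, A b i * A g i) * (∑ i, A e i * A h i) = 0 := by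
  have hcyc : ∀ x y z, f x y z = f y z x := by
    intro x y z; rw [hanti1 x y z, hanti2 y x z]; ring
  have hcyc2 : ∀ x y z, f x y z = f z x y := fun x y z =>
    (hcyc x y z).trans (hcyc y z x)
  have hswap13 : ∀ x y z, f x y z = - f z y x := by
    intro x y z; rw [hanti1 x y z, hanti2 y x z, hanti1 y z x]; ring
  have hBsymm : ∀ x y, (∑ i, A x i * A y i) = ∑ i, A y i * A x i := fun x y =>
    Finset.sum_congr rfl fun i _ => mul_comm _ _
  -- Step A : split S = T1 + T2 via the Jacobi identity
  have hA : (∑ a, ∑ b, ∑ c, ∑ d, ∑ e, ∑ g, ∑ h,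
        f a b c * f d c e * f d g h * u a *
          (∑ i, A b i * A g i) * (∑ i, A e i * A h i))
      = (∑ a, ∑ b, ∑ c, ∑ d, ∑ e, ∑ g, ∑ h,
        f b d c * f a e c * f d g h * u a *
          (∑ i, A b i * A g i) * (∑ i, A e i * A h i))
      + (∑ a, ∑ b, ∑ c, ∑ d, ∑ e, ∑ g, ∑ h,
        f d a c * f b e c * f d g h * u a *
          (∑ i, A b i * A g i) * (∑ i, A e i * A h i)) := by
    have r0 := sum7_reorder (fun a b c d e g h => f a b c * f d c e * f d g h * u a *
      (∑ i, A b i * A g i) * (∑ i, A e i * A h i))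
    have r1 := sum7_reorder (fun a b c d e g h => f b d c * f a e c * f d g h * u a *
      (∑ i, A b i * A g i) * (∑ i, A e i * A h i))
    have r2 := sum7_reorder (fun a b c d e g h => f d a c * f b e c * f d g h * u a *
      (∑ i, A b i * A g i) * (∑ i, A e i * A h i))
    beta_reduce at r0 r1 r2
    rw [r0, r1, r2]
    simp only [← Finset.sum_add_distrib]
    refine Finset.sum_congr rfl fun a _ => ?_
    refine Finset.sum_congr rfl fun b _ => ?_
    refine Finset.sum_congr rfl fun d _ => ?_
    refine Finset.sum_congr rfl fun e _ => ?_
    refine Finset.sum_congr rfl fun g _ => ?_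
    refine Finset.sum_congr rfl fun h _ => ?_
    have key : ∑ c, f a b c * f d c e
        = ∑ c, (f b d c * f a e c + f d a c * f b e c) := by
      have hJ := hJacobi a b d e
      have h1 : ∑ c, f a b c * f d c e = ∑ c, -(f a b c * f d e c) :=
        Finset.sum_congr rfl fun c _ => by rw [hanti2 d c e]; ring
      rw [h1, Finset.sum_neg_distrib]
      simp only [Finset.sum_add_distrib] at hJ ⊢
      linarith
    calc (∑ c, f a b c * f d c e * f d g h * u a *
            (∑ i, A b i * A g i) * (∑ i, A e i * A h i))
        = (∑ c, f a b c * f d c e) * (f d g h * u a *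
            (∑ i, A b i * A g i) * (∑ i, A e i * A h i)) := by
          rw [Finset.sum_mul]; exact Finset.sum_congr rfl fun c _ => by ring
      _ = (∑ c, (f b d c * f a e c + f d a c * f b e c)) * (f d g h * u a *
            (∑ i, A b i * A g i) * (∑ i, A e i * A h i)) := by rw [key]
      _ = _ := by
          rw [Finset.sum_mul]; exact Finset.sum_congr rfl fun c _ => by ring
  -- Step B : T1 = -S
  have hB : (∑ a, ∑ b, ∑ c, ∑ d, ∑ e, ∑ g, ∑ h,
        f b d c * f a e c * f d g h * u a *
          (∑ i, A b i * A g i) * (∑ i, A e i * A h i))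
      = -(∑ a, ∑ b, ∑ c, ∑ d, ∑ e, ∑ g, ∑ h,
        f a b c * f d c e * f d g h * u a *
          (∑ i, A b i * A g i) * (∑ i, A e i * A h i)) := by
    have r1 := sum7_tau1 (fun a b c d e g h => f b d c * f a e c * f d g h * u a *
      (∑ i, A b i * A g i) * (∑ i, A e i * A h i))
    beta_reduce at r1
    rw [r1]
    have : (∑ a, ∑ b, ∑ c, ∑ d, ∑ e, ∑ g, ∑ h,
          f e d c * f a b c * f d h g * u a *
            (∑ i, A e i * A h i) * (∑ i, A b i * A g i))
        = ∑ a, ∑ b, ∑ c, ∑ d, ∑ e, ∑ g, ∑ h,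
          -(f a b c * f d c e * f d g h * u a *
            (∑ i, A b i * A g i) * (∑ i, A e i * A h i)) := by
      refine Finset.sum_congr rfl fun a _ => ?_
      refine Finset.sum_congr rfl fun b _ => ?_
      refine Finset.sum_congr rfl fun c _ => ?_
      refine Finset.sum_congr rfl fun d _ => ?_
      refine Finset.sum_congr rfl fun e _ => ?_
      refine Finset.sum_congr rfl fun g _ => ?_
      refine Finset.sum_congr rfl fun h _ => ?_
      rw [hcyc e d c, hanti2 d h g]; ring
    rw [this]
    simp only [Finset.sum_neg_distrib]
  -- Step C : T2 = -T2
  have hC : (∑ a, ∑ b, ∑ c, ∑ d, ∑ e, ∑ g, ∑ h,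
        f d a c * f b e c * f d g h * u a *
          (∑ i, A b i * A g i) * (∑ i, A e i * A h i))
      = -(∑ a, ∑ b, ∑ c, ∑ d, ∑ e, ∑ g, ∑ h,
        f d a c * f b e c * f d g h * u a *
          (∑ i, A b i * A g i) * (∑ i, A e i * A h i)) := by
    have r2 := sum7_tau2 (fun a b c d e g h => f d a c * f b e c * f d g h * u a *
      (∑ i, A b i * A g i) * (∑ i, A e i * A h i))
    beta_reduce at r2
    conv_lhs => rw [r2]
    have : (∑ a, ∑ b, ∑ c, ∑ d, ∑ e, ∑ g, ∑ h,
          f c a d * f g h d * f c b e * u a *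
            (∑ i, A g i * A b i) * (∑ i, A h i * A e i))
        = ∑ a, ∑ b, ∑ c, ∑ d, ∑ e, ∑ g, ∑ h,
          -(f d a c * f b e c * f d g h * u a *
            (∑ i, A b i * A g i) * (∑ i, A e i * A h i)) := by
      refine Finset.sum_congr rfl fun a _ => ?_
      refine Finset.sum_congr rfl fun b _ => ?_
      refine Finset.sum_congr rfl fun c _ => ?_
      refine Finset.sum_congr rfl fun d _ => ?_
      refine Finset.sum_congr rfl fun e _ => ?_
      refine Finset.sum_congr rfl fun g _ => ?_
      refine Finset.sum_congr rfl fun h _ => ?_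
      rw [hswap13 c a d, hcyc2 g h d, hcyc c b e, hBsymm g b, hBsymm h e]; ring
    conv_lhs => rw [this]
    simp only [Finset.sum_neg_distrib]
  linarith
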